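/- arXiv:1808.08365 — 2 statements merged into one kernel-verified Lean document; each statement's English description precedes it below -/
import Mathlib

section
/- Define ℰ : Int D → ℂ by ℰ(x,y) = (1 − i √x √(1−y) + i √y √(1−x)) / (1 + i √x √(1−y) − i √y √(1−x)) (the Nutku–Halil solution), which is well defined since the denominator has real part 1. Then ℰ satisfies the hyperbolic Ernst equation at every point of Int D; moreover Re ℰ > 0 on Int D, and for each y ∈ [0,1): lim_{x↓0} √x · ℰ_x(x,y) = i √(1−y)/(i+√y)², and for each x ∈ [0,1): lim_{y↓0} √y · ℰ_y(x,y) = −i √(1−x)/(i−√x)². -/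
open Complex Set MeasureTheory Topology Filter ComplexConjugate

noncomputable section

/-- The triangle `D = {(x,y) : 0 ≤ x, 0 ≤ y, x + y < 1}`. -/
def TriD : Set (ℝ × ℝ) := {p | 0 ≤ p.1 ∧ 0 ≤ p.2 ∧ p.1 + p.2 < 1}

/-- Partial derivative in the first variable. -/
def pdx (f : ℝ → ℝ → ℂ) (x y : ℝ) : ℂ := deriv (fun t => f t y) x

/-- Partial derivative in the second variable. -/
def pdy (f : ℝ → ℝ → ℂ) (x y : ℝ) : ℂ := deriv (fun t => f x t) y

/-- Mixed second partial derivative. -/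
def pdxy (f : ℝ → ℝ → ℂ) (x y : ℝ) : ℂ := pdx (fun a b => pdy f a b) x y

/-- Partial derivative in the first variable (real valued). -/
def pdxR (f : ℝ → ℝ → ℝ) (x y : ℝ) : ℝ := deriv (fun t => f t y) x

/-- Partial derivative in the second variable (real valued). -/
def pdyR (f : ℝ → ℝ → ℝ) (x y : ℝ) : ℝ := deriv (fun t => f x t) y

/-- Mixed second partial derivative (real valued). -/
def pdxyR (f : ℝ → ℝ → ℝ) (x y : ℝ) : ℝ := pdxR (fun a b => pdyR f a b) x y

/-- The hyperbolic Ernst equation at a point. -/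
def ErnstEqAt (E : ℝ → ℝ → ℂ) (x y : ℝ) : Prop :=
  (((E x y).re : ℂ)) * (pdxy E x y - (pdx E x y + pdy E x y) / (2 * (1 - x - y))) =
    pdx E x y * pdy E x y

/-- The Euler–Darboux equation at a point. -/
def EulerDarbouxAt (V : ℝ → ℝ → ℝ) (x y : ℝ) : Prop :=
  pdxyR V x y - (pdxR V x y + pdyR V x y) / (2 * (1 - x - y)) = 0

/-- `λ(x,y,k) = √((k-(1-y))/(k-x))`, principal branch (`Re λ > 0` off the cut). -/
def lam (x y : ℝ) (k : ℂ) : ℂ := ((k - (1 - (y : ℂ))) / (k - (x : ℂ))) ^ (1/2 : ℂ)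

/-- The segment `[0,1]` inside `ℂ`. -/
def seg01 : Set ℂ := (fun t : ℝ => (t : ℂ)) '' Icc 0 1

/-- A `C^n`-solution of the Goursat problem for the hyperbolic Ernst equation in `D`
with data `{E0, E1}`, with regularity exponent `α`. -/
def ErnstSolutionWith (n : ℕ) (α : ℝ) (E : ℝ → ℝ → ℂ) (E0 E1 : ℝ → ℂ) : Prop :=
  ContinuousOn (fun p : ℝ × ℝ => E p.1 p.2) TriD ∧
  ContDiffOn ℝ n (fun p : ℝ × ℝ => E p.1 p.2) (interior TriD) ∧
  (∀ p ∈ interior TriD, ErnstEqAt E p.1 p.2) ∧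
  (∃ g : ℝ × ℝ → ℂ, ContinuousOn g TriD ∧
      ∀ p ∈ interior TriD, g p = ((p.1 ^ α : ℝ) : ℂ) * pdx E p.1 p.2) ∧
  (∃ g : ℝ × ℝ → ℂ, ContinuousOn g TriD ∧
      ∀ p ∈ interior TriD, g p = ((p.2 ^ α : ℝ) : ℂ) * pdy E p.1 p.2) ∧
  (∃ g : ℝ × ℝ → ℂ, ContinuousOn g TriD ∧
      ∀ p ∈ interior TriD, g p = ((p.1 ^ α * p.2 ^ α : ℝ) : ℂ) * pdxy E p.1 p.2) ∧
  (∀ x ∈ Ico (0:ℝ) 1, E x 0 = E0 x) ∧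
  (∀ y ∈ Ico (0:ℝ) 1, E 0 y = E1 y) ∧
  (∀ p ∈ TriD, 0 < (E p.1 p.2).re)

/-- A `C^n`-solution of the Goursat problem for the hyperbolic Ernst equation in `D`
(with regularity exponent `α` existentially quantified over `[0,1)`). -/
def ErnstSolution (n : ℕ) (E : ℝ → ℝ → ℂ) (E0 E1 : ℝ → ℂ) : Prop :=
  ∃ α ∈ Ico (0:ℝ) 1, ErnstSolutionWith n α E E0 E1

/-- A `C^n`-solution of the Goursat problem for the Euler–Darboux equation in `D`
with data `{V0, V1}`, with regularity exponent `α`. -/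
def EDSolutionWith (n : ℕ) (α : ℝ) (V : ℝ → ℝ → ℝ) (V0 V1 : ℝ → ℝ) : Prop :=
  ContinuousOn (fun p : ℝ × ℝ => V p.1 p.2) TriD ∧
  ContDiffOn ℝ n (fun p : ℝ × ℝ => V p.1 p.2) (interior TriD) ∧
  (∀ p ∈ interior TriD, EulerDarbouxAt V p.1 p.2) ∧
  (∃ g : ℝ × ℝ → ℝ, ContinuousOn g TriD ∧
      ∀ p ∈ interior TriD, g p = p.1 ^ α * pdxR V p.1 p.2) ∧
  (∃ g : ℝ × ℝ → ℝ, ContinuousOn g TriD ∧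
      ∀ p ∈ interior TriD, g p = p.2 ^ α * pdyR V p.1 p.2) ∧
  (∃ g : ℝ × ℝ → ℝ, ContinuousOn g TriD ∧
      ∀ p ∈ interior TriD, g p = p.1 ^ α * p.2 ^ α * pdxyR V p.1 p.2) ∧
  (∀ x ∈ Ico (0:ℝ) 1, V x 0 = V0 x) ∧
  (∀ y ∈ Ico (0:ℝ) 1, V 0 y = V1 y)

/-- A `C^n`-solution of the Goursat problem for the Euler–Darboux equation in `D`. -/
def EDSolution (n : ℕ) (V : ℝ → ℝ → ℝ) (V0 V1 : ℝ → ℝ) : Prop :=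
  ∃ α ∈ Ico (0:ℝ) 1, EDSolutionWith n α V V0 V1

/-- The data assumptions (1.5) on a single boundary datum for the Ernst equation. -/
def ErnstData (n : ℕ) (α : ℝ) (E0 : ℝ → ℂ) : Prop :=
  ContinuousOn E0 (Ico 0 1) ∧ ContDiffOn ℝ n E0 (Ioo 0 1) ∧
  (∃ g : ℝ → ℂ, ContinuousOn g (Ico 0 1) ∧
      ∀ x ∈ Ioo (0:ℝ) 1, g x = ((x ^ α : ℝ) : ℂ) * deriv E0 x) ∧
  E0 0 = 1 ∧ (∀ x ∈ Ico (0:ℝ) 1, 0 < (E0 x).re)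

/-- The data assumptions on a single boundary datum for the Euler–Darboux equation. -/
def EDData (n : ℕ) (α : ℝ) (V0 : ℝ → ℝ) : Prop :=
  ContinuousOn V0 (Ico 0 1) ∧ ContDiffOn ℝ n V0 (Ioo 0 1) ∧
  (∃ g : ℝ → ℝ, ContinuousOn g (Ico 0 1) ∧
      ∀ x ∈ Ioo (0:ℝ) 1, g x = x ^ α * deriv V0 x) ∧
  V0 0 = 0

/-- The matrix `U0(x,k)` of the x-part of the Lax pair, built from the boundary datum. -/
def U0mat (E0 : ℝ → ℂ) (x : ℝ) (k : ℂ) : Matrix (Fin 2) (Fin 2) ℂ :=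
  (1 / (2 * ((E0 x).re : ℂ))) •
    !![conj (deriv E0 x), lam x 0 k * conj (deriv E0 x);
       lam x 0 k * deriv E0 x, deriv E0 x]

/-- The matrix `U(x,y,k)` of the Lax pair. -/
def Umat (E : ℝ → ℝ → ℂ) (k : ℂ) (x y : ℝ) : Matrix (Fin 2) (Fin 2) ℂ :=
  (1 / (2 * ((E x y).re : ℂ))) •
    !![conj (pdx E x y), lam x y k * conj (pdx E x y);
       lam x y k * pdx E x y, pdx E x y]

/-- The matrix `V(x,y,k)` of the Lax pair. -/
def Vmat (E : ℝ → ℝ → ℂ) (k : ℂ) (x y : ℝ) : Matrix (Fin 2) (Fin 2) ℂ :=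
  (1 / (2 * ((E x y).re : ℂ))) •
    !![conj (pdy E x y), (lam x y k)⁻¹ * conj (pdy E x y);
       (lam x y k)⁻¹ * pdy E x y, pdy E x y]

/-- The Nutku–Halil Ernst potential. -/
def NutkuHalil (x y : ℝ) : ℂ :=
  (1 - Complex.I * ((Real.sqrt x * Real.sqrt (1 - y) : ℝ) : ℂ)
      + Complex.I * ((Real.sqrt y * Real.sqrt (1 - x) : ℝ) : ℂ)) /
    (1 + Complex.I * ((Real.sqrt x * Real.sqrt (1 - y) : ℝ) : ℂ)
      - Complex.I * ((Real.sqrt y * Real.sqrt (1 - x) : ℝ) : ℂ))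

namespace NHaux

open Real (sqrt)

/-- `u(x,y) = √x √(1-y) - √y √(1-x)`. -/
def uu (x y : ℝ) : ℝ := Real.sqrt x * Real.sqrt (1-y) - Real.sqrt y * Real.sqrt (1-x)

def aX (x y : ℝ) : ℝ := Real.sqrt (1-y)/(2*Real.sqrt x) + Real.sqrt y/(2*Real.sqrt (1-x))

def aY (x y : ℝ) : ℝ := -(Real.sqrt x/(2*Real.sqrt (1-y)) + Real.sqrt (1-x)/(2*Real.sqrt y))

def aXY (x y : ℝ) : ℝ := -1/(4*Real.sqrt x*Real.sqrt (1-y)) + 1/(4*Real.sqrt (1-x)*Real.sqrt y)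

lemma den_ne (s : ℝ) : (1 : ℂ) + Complex.I * (s : ℂ) ≠ 0 := by
  intro h
  have := congrArg Complex.re h
  simp at this

lemma NH_eq (x y : ℝ) :
    NutkuHalil x y = (1 - Complex.I * ((uu x y : ℝ) : ℂ))/(1 + Complex.I * ((uu x y : ℝ) : ℂ)) := by
  unfold NutkuHalil uu
  push_cast
  ring_nf

lemma hasDerivAt_sqrt_one_sub {x : ℝ} (h1 : x < 1) :
    HasDerivAt (fun t : ℝ => Real.sqrt (1-t)) (-(1/(2*Real.sqrt (1-x)))) x := by
  have h2 : HasDerivAt (fun t : ℝ => 1 - t) (-1) x := (hasDerivAt_id x).const_sub 1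
  have h3 := (Real.hasDerivAt_sqrt (ne_of_gt (by linarith : (0:ℝ) < 1 - x))).comp x h2
  refine h3.congr_deriv ?_
  ring

lemma hasDerivAt_uu_x (y : ℝ) {x : ℝ} (h0 : 0 < x) (h1 : x < 1) :
    HasDerivAt (fun t => uu t y) (aX x y) x := by
  have hs := Real.hasDerivAt_sqrt h0.ne'
  have hc := hasDerivAt_sqrt_one_sub h1
  have h := (hs.mul_const (Real.sqrt (1-y))).sub (hc.const_mul (Real.sqrt y))
  refine h.congr_deriv ?_
  unfold aX
  ring

lemma hasDerivAt_uu_y (x : ℝ) {y : ℝ} (h0 : 0 < y) (h1 : y < 1) :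
    HasDerivAt (fun t => uu x t) (aY x y) y := by
  have hs := Real.hasDerivAt_sqrt h0.ne'
  have hc := hasDerivAt_sqrt_one_sub h1
  have h := (hc.const_mul (Real.sqrt x)).sub (hs.mul_const (Real.sqrt (1-x)))
  refine h.congr_deriv ?_
  unfold aY
  ring

lemma hasDerivAt_aY_x (y : ℝ) {x : ℝ} (h0 : 0 < x) (h1 : x < 1) :
    HasDerivAt (fun t => aY t y) (aXY x y) x := by
  have hs := (Real.hasDerivAt_sqrt h0.ne').div_const (2*Real.sqrt (1-y))
  have hc := (hasDerivAt_sqrt_one_sub h1).div_const (2*Real.sqrt y)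
  have h := (hs.add hc).neg
  refine h.congr_deriv ?_
  unfold aXY
  ring

lemma hasDerivAt_NH_x (y : ℝ) {x : ℝ} (h0 : 0 < x) (h1 : x < 1) :
    HasDerivAt (fun t => NutkuHalil t y)
      (-2*Complex.I*((aX x y : ℝ):ℂ)/(1 + Complex.I*((uu x y : ℝ):ℂ))^2) x := by
  have hu := (hasDerivAt_uu_x y h0 h1).ofReal_comp
  have hnum : HasDerivAt (fun t => (1:ℂ) - Complex.I*((uu t y : ℝ):ℂ))
      (-(Complex.I*((aX x y : ℝ):ℂ))) x := (hu.const_mul Complex.I).const_sub 1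
  have hden : HasDerivAt (fun t => (1:ℂ) + Complex.I*((uu t y : ℝ):ℂ))
      (Complex.I*((aX x y : ℝ):ℂ)) x := (hu.const_mul Complex.I).const_add 1
  have hne : (1:ℂ) + Complex.I*((uu x y : ℝ):ℂ) ≠ 0 := den_ne _
  have h : HasDerivAt (fun t => ((1:ℂ) - Complex.I*((uu t y : ℝ):ℂ))/(1 + Complex.I*((uu t y : ℝ):ℂ))) _ x :=
    hnum.div hden hne
  have heq : (fun t => NutkuHalil t y)
      = fun t => ((1:ℂ) - Complex.I*((uu t y : ℝ):ℂ))/(1 + Complex.I*((uu t y : ℝ):ℂ)) :=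
    funext fun t => NH_eq t y
  rw [heq]
  convert h using 1
  rw [div_eq_div_iff (pow_ne_zero 2 hne) (pow_ne_zero 2 hne)]
  ring

lemma hasDerivAt_NH_y (x : ℝ) {y : ℝ} (h0 : 0 < y) (h1 : y < 1) :
    HasDerivAt (fun t => NutkuHalil x t)
      (-2*Complex.I*((aY x y : ℝ):ℂ)/(1 + Complex.I*((uu x y : ℝ):ℂ))^2) y := by
  have hu := (hasDerivAt_uu_y x h0 h1).ofReal_comp
  have hnum : HasDerivAt (fun t => (1:ℂ) - Complex.I*((uu x t : ℝ):ℂ))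
      (-(Complex.I*((aY x y : ℝ):ℂ))) y := (hu.const_mul Complex.I).const_sub 1
  have hden : HasDerivAt (fun t => (1:ℂ) + Complex.I*((uu x t : ℝ):ℂ))
      (Complex.I*((aY x y : ℝ):ℂ)) y := (hu.const_mul Complex.I).const_add 1
  have hne : (1:ℂ) + Complex.I*((uu x y : ℝ):ℂ) ≠ 0 := den_ne _
  have h : HasDerivAt (fun t => ((1:ℂ) - Complex.I*((uu x t : ℝ):ℂ))/(1 + Complex.I*((uu x t : ℝ):ℂ))) _ y :=
    hnum.div hden hne
  have heq : (fun t => NutkuHalil x t)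
      = fun t => ((1:ℂ) - Complex.I*((uu x t : ℝ):ℂ))/(1 + Complex.I*((uu x t : ℝ):ℂ)) :=
    funext fun t => NH_eq x t
  rw [heq]
  convert h using 1
  rw [div_eq_div_iff (pow_ne_zero 2 hne) (pow_ne_zero 2 hne)]
  ring

lemma pdx_eq (y : ℝ) {x : ℝ} (h0 : 0 < x) (h1 : x < 1) :
    pdx NutkuHalil x y = -2*Complex.I*((aX x y : ℝ):ℂ)/(1 + Complex.I*((uu x y : ℝ):ℂ))^2 :=
  (hasDerivAt_NH_x y h0 h1).deriv

lemma pdy_eq (x : ℝ) {y : ℝ} (h0 : 0 < y) (h1 : y < 1) :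
    pdy NutkuHalil x y = -2*Complex.I*((aY x y : ℝ):ℂ)/(1 + Complex.I*((uu x y : ℝ):ℂ))^2 :=
  (hasDerivAt_NH_y x h0 h1).deriv

lemma pdxy_eq {x y : ℝ} (hx0 : 0 < x) (hx1 : x < 1) (hy0 : 0 < y) (hy1 : y < 1) :
    pdxy NutkuHalil x y
      = -2*Complex.I*((aXY x y : ℝ):ℂ)/(1 + Complex.I*((uu x y : ℝ):ℂ))^2
        - 4*((aX x y : ℝ):ℂ)*((aY x y : ℝ):ℂ)/(1 + Complex.I*((uu x y : ℝ):ℂ))^3 := by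
  have hEv : (fun t => pdy NutkuHalil t y)
      =ᶠ[𝓝 x] (fun t => -2*Complex.I*((aY t y : ℝ):ℂ)/(1 + Complex.I*((uu t y : ℝ):ℂ))^2) := by
    filter_upwards [Ioo_mem_nhds hx0 hx1] with t _
    exact pdy_eq t hy0 hy1
  have hu := (hasDerivAt_uu_x y hx0 hx1).ofReal_comp
  have hb := (hasDerivAt_aY_x y hx0 hx1).ofReal_comp
  have hnum : HasDerivAt (fun t => -2*Complex.I*((aY t y : ℝ):ℂ))
      (-2*Complex.I*((aXY x y : ℝ):ℂ)) x := by
    have := hb.const_mul (-2*Complex.I)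
    convert this using 1
  have hden0 : HasDerivAt (fun t => (1:ℂ) + Complex.I*((uu t y : ℝ):ℂ))
      (Complex.I*((aX x y : ℝ):ℂ)) x := (hu.const_mul Complex.I).const_add 1
  have hden : HasDerivAt (fun t => ((1:ℂ) + Complex.I*((uu t y : ℝ):ℂ))^2)
      (Complex.I*((aX x y : ℝ):ℂ) * (1 + Complex.I*((uu x y : ℝ):ℂ))
        + (1 + Complex.I*((uu x y : ℝ):ℂ)) * (Complex.I*((aX x y : ℝ):ℂ))) x := by
    have := hden0.mul hden0
    simp only [pow_two]
    exact this
  have hne : (1:ℂ) + Complex.I*((uu x y : ℝ):ℂ) ≠ 0 := den_ne _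
  have h : HasDerivAt (fun t => -2*Complex.I*((aY t y : ℝ):ℂ)/(1 + Complex.I*((uu t y : ℝ):ℂ))^2) _ x :=
    hnum.div hden (pow_ne_zero 2 hne)
  unfold pdxy pdx
  rw [hEv.deriv_eq, h.deriv]
  rw [div_sub_div _ _ (pow_ne_zero 2 hne) (pow_ne_zero 3 hne),
    div_eq_div_iff (pow_ne_zero 2 (pow_ne_zero 2 hne))
      (mul_ne_zero (pow_ne_zero 2 hne) (pow_ne_zero 3 hne))]
  linear_combination (4*((aX x y : ℝ):ℂ)*((aY x y : ℝ):ℂ)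
    *(1 + Complex.I*((uu x y : ℝ):ℂ))^6) * Complex.I_sq

lemma NH_re (x y : ℝ) :
    (NutkuHalil x y).re = (1 - (uu x y)^2)/(1 + (uu x y)^2) := by
  rw [NH_eq]
  rw [Complex.div_re]
  simp [Complex.normSq_apply]
  ring_nf

end NHaux

namespace NHaux
lemma ernst_key (s a b c w : ℝ) (hw : w ≠ 0)
    (h : (1 - s^2)*(2*w*c - (a+b)) + 4*s*w*a*b = 0) :
    (((1 - s^2)/(1 + s^2) : ℝ) : ℂ) *
      ((-2*Complex.I*(c:ℂ)/(1+Complex.I*(s:ℂ))^2 - 4*(a:ℂ)*(b:ℂ)/(1+Complex.I*(s:ℂ))^3)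
        - (-2*Complex.I*(a:ℂ)/(1+Complex.I*(s:ℂ))^2
            + -2*Complex.I*(b:ℂ)/(1+Complex.I*(s:ℂ))^2)/(2*(w:ℂ)))
      = (-2*Complex.I*(a:ℂ)/(1+Complex.I*(s:ℂ))^2)
          * (-2*Complex.I*(b:ℂ)/(1+Complex.I*(s:ℂ))^2) := by
  have hd : (1:ℂ)+Complex.I*(s:ℂ) ≠ 0 := den_ne s
  have hw' : (w:ℂ) ≠ 0 := Complex.ofReal_ne_zero.2 hw
  have h1 : ((1:ℂ)+(s:ℂ)^2) ≠ 0 := by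
    have : ((1+s^2 : ℝ):ℂ) ≠ 0 := Complex.ofReal_ne_zero.2 (by positivity)
    push_cast at this
    exact this
  have hC : ((1:ℂ) - (s:ℂ)^2)*(2*(w:ℂ)*(c:ℂ) - ((a:ℂ)+(b:ℂ))) + 4*(s:ℂ)*(w:ℂ)*(a:ℂ)*(b:ℂ) = 0 := by
    have := congrArg (fun r : ℝ => (r:ℂ)) h
    push_cast at this
    simpa using this
  have hD : ((1:ℂ) + (s:ℂ) ^ 2) *
      ((1 + Complex.I * (s:ℂ)) ^ 2 * (1 + Complex.I * (s:ℂ)) ^ 3 *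
        ((1 + Complex.I * (s:ℂ)) ^ 2 * (1 + Complex.I * (s:ℂ)) ^ 2 * (2 * (w:ℂ)))) ≠ 0 := by
    refine mul_ne_zero h1 (mul_ne_zero (mul_ne_zero (pow_ne_zero _ hd) (pow_ne_zero _ hd))
      (mul_ne_zero (mul_ne_zero (pow_ne_zero _ hd) (pow_ne_zero _ hd))
        (mul_ne_zero two_ne_zero hw')))
  push_cast
  field_simp
  have hd' : (1:ℂ) + (s:ℂ)*Complex.I ≠ 0 := by rw [mul_comm]; exact hd
  rw [div_eq_div_iff (pow_ne_zero 3 hd') (pow_ne_zero 4 hd')]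
  linear_combination (-Complex.I*(1+(s:ℂ)*Complex.I)^5) * hC
    + (4*(a:ℂ)*(b:ℂ)*(w:ℂ)*(1+(s:ℂ)*Complex.I)^3*((s:ℂ)^3*Complex.I + (s:ℂ)^2 - 1)) * Complex.I_sq
end NHaux

namespace NHaux

lemma condA {x y : ℝ} (hx0 : 0 < x) (hy0 : 0 < y) (hxy : x + y < 1) :
    (1 - (uu x y)^2)*(2*(1-x-y)*(aXY x y) - (aX x y + aY x y))
      + 4*(uu x y)*(1-x-y)*(aX x y)*(aY x y) = 0 := by
  have hx1 : x < 1 := by linarith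
  have hy1 : y < 1 := by linarith
  have hsx : 0 < Real.sqrt x := Real.sqrt_pos.2 hx0
  have hsy : 0 < Real.sqrt y := Real.sqrt_pos.2 hy0
  have hcx : 0 < Real.sqrt (1-x) := Real.sqrt_pos.2 (by linarith)
  have hcy : 0 < Real.sqrt (1-y) := Real.sqrt_pos.2 (by linarith)
  have e1 : Real.sqrt x ^ 2 = x := Real.sq_sqrt hx0.le
  have e2 : Real.sqrt y ^ 2 = y := Real.sq_sqrt hy0.le
  have e3 : Real.sqrt (1-x) ^ 2 = 1 - x := Real.sq_sqrt (by linarith)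
  have e4 : Real.sqrt (1-y) ^ 2 = 1 - y := Real.sq_sqrt (by linarith)
  unfold uu aX aY aXY
  field_simp
  have hS : 1 - (Real.sqrt x * Real.sqrt (1-y) - Real.sqrt y * Real.sqrt (1-x))^2
      = (Real.sqrt (1-y) * Real.sqrt (1-x) + Real.sqrt x * Real.sqrt y)^2 := by
    linear_combination (-(Real.sqrt (1-y)^2 + Real.sqrt y^2))*e1
      + (-(Real.sqrt (1-x)^2 + x))*e2 + (-(y + Real.sqrt (1-y)^2))*e3 + (-1)*e4
  have hW : 1 - x - y = (Real.sqrt (1-y) * Real.sqrt (1-x) + Real.sqrt x * Real.sqrt y)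
      * (Real.sqrt (1-y) * Real.sqrt (1-x) - Real.sqrt x * Real.sqrt y) := by
    linear_combination y*e1 + Real.sqrt x^2*e2 - Real.sqrt (1-y)^2*e3 - (1-x)*e4
  have hTU : (Real.sqrt (1-y) * Real.sqrt (1-x) - Real.sqrt x * Real.sqrt y)
      * (Real.sqrt x * Real.sqrt (1-y) - Real.sqrt y * Real.sqrt (1-x))
      = Real.sqrt x * Real.sqrt (1-x) - Real.sqrt y * Real.sqrt (1-y) := by
    linear_combination Real.sqrt x * Real.sqrt (1-x) * (e2 + e4)
      - Real.sqrt y * Real.sqrt (1-y) * (e1 + e3)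
  linear_combination
    (2*(4*(1-x-y)*(Real.sqrt x * Real.sqrt (1-y) - Real.sqrt y * Real.sqrt (1-x))
      - 4*(Real.sqrt (1-y) * Real.sqrt (1-x) + Real.sqrt x * Real.sqrt y)
        *(Real.sqrt (1-y) * Real.sqrt y - Real.sqrt x * Real.sqrt (1-x)))) * hS
    - 8*(Real.sqrt (1-y) * Real.sqrt (1-x) + Real.sqrt x * Real.sqrt y)^2
      *(Real.sqrt x * Real.sqrt (1-y) - Real.sqrt y * Real.sqrt (1-x)) * hW
    - 8*(Real.sqrt (1-y) * Real.sqrt (1-x) + Real.sqrt x * Real.sqrt y)^3 * hTU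

lemma interior_TriD :
    interior TriD = {p : ℝ × ℝ | 0 < p.1 ∧ 0 < p.2 ∧ p.1 + p.2 < 1} := by
  apply Subset.antisymm
  · rintro ⟨x, y⟩ h
    have hmem : TriD ∈ 𝓝 ((x, y) : ℝ × ℝ) := mem_interior_iff_mem_nhds.1 h
    obtain ⟨ε, hε, hball⟩ := Metric.mem_nhds_iff.1 hmem
    have hd1 : ((x - ε/2, y) : ℝ × ℝ) ∈ Metric.ball ((x,y) : ℝ × ℝ) ε := by
      rw [Metric.mem_ball, Prod.dist_eq]
      apply max_lt
      · rw [Real.dist_eq, show x - ε/2 - x = -(ε/2) by ring, abs_neg,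
          _root_.abs_of_nonneg (by positivity : (0:ℝ) ≤ ε/2)]
        linarith
      · simpa using hε
    have hd2 : ((x, y - ε/2) : ℝ × ℝ) ∈ Metric.ball ((x,y) : ℝ × ℝ) ε := by
      rw [Metric.mem_ball, Prod.dist_eq]
      apply max_lt
      · simpa using hε
      · rw [Real.dist_eq, show y - ε/2 - y = -(ε/2) by ring, abs_neg,
          _root_.abs_of_nonneg (by positivity : (0:ℝ) ≤ ε/2)]
        linarith
    have h1 := hball hd1
    have h2 := hball hd2
    have h3 : ((x,y) : ℝ × ℝ) ∈ TriD := interior_subset h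
    obtain ⟨ha, -, -⟩ := h1
    obtain ⟨-, hb, -⟩ := h2
    obtain ⟨-, -, hc⟩ := h3
    simp only at ha hb hc
    exact ⟨by linarith, by linarith, hc⟩
  · apply interior_maximal
    · rintro ⟨x, y⟩ ⟨h1, h2, h3⟩
      exact ⟨h1.le, h2.le, h3⟩
    · exact (isOpen_lt continuous_const continuous_fst).and
        ((isOpen_lt continuous_const continuous_snd).and
          (isOpen_lt (continuous_fst.add continuous_snd) continuous_const))

lemma one_sub_sq_pos {x y : ℝ} (hx0 : 0 < x) (hy0 : 0 < y) (hxy : x + y < 1) :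
    0 < 1 - (uu x y)^2 := by
  have hsx : 0 ≤ Real.sqrt x := Real.sqrt_nonneg x
  have hsy : 0 ≤ Real.sqrt y := Real.sqrt_nonneg y
  have hcx : 0 < Real.sqrt (1-x) := Real.sqrt_pos.2 (by linarith)
  have hcy : 0 < Real.sqrt (1-y) := Real.sqrt_pos.2 (by linarith)
  have e1 : Real.sqrt x ^ 2 = x := Real.sq_sqrt hx0.le
  have e2 : Real.sqrt y ^ 2 = y := Real.sq_sqrt hy0.le
  have e3 : Real.sqrt (1-x) ^ 2 = 1 - x := Real.sq_sqrt (by linarith)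
  have e4 : Real.sqrt (1-y) ^ 2 = 1 - y := Real.sq_sqrt (by linarith)
  have key : 1 - (uu x y)^2
      = (Real.sqrt (1-x) * Real.sqrt (1-y) + Real.sqrt x * Real.sqrt y)^2 := by
    unfold uu
    linear_combination (-(Real.sqrt (1-y)^2 + Real.sqrt y^2))*e1
      + (-(Real.sqrt (1-x)^2 + x))*e2 + (-(y + Real.sqrt (1-y)^2))*e3 + (-1)*e4
  rw [key]
  positivity

end NHaux

namespace NHaux

lemma sqrt_mul_aX {x y : ℝ} (hx : 0 < x) :
    Real.sqrt x * aX x y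
      = Real.sqrt (1-y)/2 + Real.sqrt x * Real.sqrt y/(2*Real.sqrt (1-x)) := by
  unfold aX
  have h1 : Real.sqrt x ≠ 0 := (Real.sqrt_pos.2 hx).ne'
  field_simp

lemma sqrt_mul_aY {x y : ℝ} (hy : 0 < y) :
    Real.sqrt y * aY x y
      = -(Real.sqrt x * Real.sqrt y/(2*Real.sqrt (1-y)) + Real.sqrt (1-x)/2) := by
  unfold aY
  have h1 : Real.sqrt y ≠ 0 := (Real.sqrt_pos.2 hy).ne'
  field_simp

end NHaux

open NHaux in
/-- The Nutku–Halil potential is well defined on Int D (its denominator has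
real part 1), solves the hyperbolic Ernst equation there, has positive real part, and has
the stated boundary behavior. -/
theorem nutkuHalil_solution :
    (∀ p ∈ interior TriD,
      (1 + Complex.I * ((Real.sqrt p.1 * Real.sqrt (1 - p.2) : ℝ) : ℂ)
        - Complex.I * ((Real.sqrt p.2 * Real.sqrt (1 - p.1) : ℝ) : ℂ)).re = 1) ∧
    (∀ p ∈ interior TriD, ErnstEqAt NutkuHalil p.1 p.2) ∧
    (∀ p ∈ interior TriD, 0 < (NutkuHalil p.1 p.2).re) ∧
    (∀ y ∈ Ico (0:ℝ) 1,
      Tendsto (fun x : ℝ => ((Real.sqrt x : ℝ) : ℂ) * pdx NutkuHalil x y) (𝓝[>] 0)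
        (𝓝 (Complex.I * ((Real.sqrt (1 - y) : ℝ) : ℂ) /
          (Complex.I + ((Real.sqrt y : ℝ) : ℂ)) ^ 2))) ∧
    (∀ x ∈ Ico (0:ℝ) 1,
      Tendsto (fun y : ℝ => ((Real.sqrt y : ℝ) : ℂ) * pdy NutkuHalil x y) (𝓝[>] 0)
        (𝓝 (-(Complex.I * ((Real.sqrt (1 - x) : ℝ) : ℂ)) /
          (Complex.I - ((Real.sqrt x : ℝ) : ℂ)) ^ 2))) := by
  refine ⟨?_, ?_, ?_, ?_, ?_⟩
  · intro p _
    simp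
  · -- Ernst equation
    rintro ⟨x, y⟩ hp
    rw [interior_TriD] at hp
    obtain ⟨hx0, hy0, hxy⟩ := hp
    have hx1 : x < 1 := by linarith
    have hy1 : y < 1 := by linarith
    unfold ErnstEqAt
    rw [pdx_eq y hx0 hx1, pdy_eq x hy0 hy1, pdxy_eq hx0 hx1 hy0 hy1, NH_re]
    have hw2 : ((1-x-y : ℝ):ℂ) = 1 - ((x:ℝ):ℂ) - ((y:ℝ):ℂ) := by push_cast; ring
    rw [← hw2]
    exact ernst_key (uu x y) (aX x y) (aY x y) (aXY x y) (1-x-y)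
      (ne_of_gt (by linarith)) (condA hx0 hy0 hxy)
  · -- positivity
    rintro ⟨x, y⟩ hp
    rw [interior_TriD] at hp
    obtain ⟨hx0, hy0, hxy⟩ := hp
    rw [NH_re]
    exact div_pos (one_sub_sq_pos hx0 hy0 hxy) (by positivity)
  · -- limit in x
    intro y hy
    obtain ⟨hy0, hy1⟩ := hy
    have hEv : (fun x : ℝ => ((Real.sqrt x : ℝ):ℂ) * pdx NutkuHalil x y) =ᶠ[𝓝[>] (0:ℝ)]
        (fun x => -2*Complex.I
          *((Real.sqrt (1-y)/2 + Real.sqrt x*Real.sqrt y/(2*Real.sqrt (1-x)) : ℝ):ℂ)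
          /(1+Complex.I*((uu x y : ℝ):ℂ))^2) := by
      filter_upwards [Ioo_mem_nhdsGT_of_mem (left_mem_Ico.2 one_pos)] with x hx
      rw [pdx_eq y hx.1 hx.2, ← sqrt_mul_aX hx.1]
      push_cast
      ring
    rw [tendsto_congr' hEv]
    have l1 : Tendsto (fun x : ℝ =>
          Real.sqrt (1-y)/2 + Real.sqrt x*Real.sqrt y/(2*Real.sqrt (1-x)))
        (𝓝[>] (0:ℝ)) (𝓝 (Real.sqrt (1-y)/2)) := by
      have hc : ContinuousAt (fun x : ℝ =>
          Real.sqrt (1-y)/2 + Real.sqrt x*Real.sqrt y/(2*Real.sqrt (1-x))) 0 := by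
        apply ContinuousAt.add continuousAt_const
        apply ContinuousAt.div
        · exact Real.continuous_sqrt.continuousAt.mul continuousAt_const
        · exact continuousAt_const.mul
            (Real.continuous_sqrt.continuousAt.comp
              (continuous_const.sub continuous_id).continuousAt)
        · norm_num
      have := hc.tendsto.mono_left (nhdsWithin_le_nhds : 𝓝[>] (0:ℝ) ≤ 𝓝 0)
      simpa using this
    have l2 : Tendsto (fun x : ℝ => uu x y) (𝓝[>] (0:ℝ)) (𝓝 (-Real.sqrt y)) := by
      have hc : ContinuousAt (fun x : ℝ => uu x y) 0 := by
        unfold uu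
        exact (Real.continuous_sqrt.continuousAt.mul continuousAt_const).sub
          (continuousAt_const.mul (Real.continuous_sqrt.continuousAt.comp
            (continuous_const.sub continuous_id).continuousAt))
      have := hc.tendsto.mono_left (nhdsWithin_le_nhds : 𝓝[>] (0:ℝ) ≤ 𝓝 0)
      simpa [uu] using this
    have hne : ((1:ℂ)+Complex.I*((-Real.sqrt y : ℝ):ℂ))^2 ≠ 0 := pow_ne_zero _ (den_ne _)
    have T : Tendsto (fun x : ℝ => -2*Complex.I
          *((Real.sqrt (1-y)/2 + Real.sqrt x*Real.sqrt y/(2*Real.sqrt (1-x)) : ℝ):ℂ)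
          /(1+Complex.I*((uu x y : ℝ):ℂ))^2) (𝓝[>] (0:ℝ))
        (𝓝 (-2*Complex.I*((Real.sqrt (1-y)/2 : ℝ):ℂ)
          /(1+Complex.I*((-Real.sqrt y : ℝ):ℂ))^2)) := by
      apply Tendsto.div
      · exact tendsto_const_nhds.mul ((Complex.continuous_ofReal.tendsto _).comp l1)
      · exact (tendsto_const_nhds.add
          (tendsto_const_nhds.mul ((Complex.continuous_ofReal.tendsto _).comp l2))).pow 2
      · exact hne
    have hval : Complex.I * ((Real.sqrt (1-y) : ℝ):ℂ)/(Complex.I + ((Real.sqrt y : ℝ):ℂ))^2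
        = -2*Complex.I*((Real.sqrt (1-y)/2 : ℝ):ℂ)/(1+Complex.I*((-Real.sqrt y : ℝ):ℂ))^2 := by
      have hI : Complex.I + ((Real.sqrt y : ℝ):ℂ) ≠ 0 := by
        intro h
        have := congrArg Complex.im h
        simp at this
      rw [div_eq_div_iff (pow_ne_zero 2 hI) (pow_ne_zero 2 (den_ne _))]
      push_cast
      linear_combination (Complex.I*((Real.sqrt (1-y) : ℝ):ℂ)
        *(1+((Real.sqrt y : ℝ):ℂ)^2)) * Complex.I_sq
    rw [hval]
    exact T
  · -- limit in y
    intro x hx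
    obtain ⟨hx0, hx1⟩ := hx
    have hEv : (fun y : ℝ => ((Real.sqrt y : ℝ):ℂ) * pdy NutkuHalil x y) =ᶠ[𝓝[>] (0:ℝ)]
        (fun y => -2*Complex.I
          *((-(Real.sqrt x*Real.sqrt y/(2*Real.sqrt (1-y)) + Real.sqrt (1-x)/2) : ℝ):ℂ)
          /(1+Complex.I*((uu x y : ℝ):ℂ))^2) := by
      filter_upwards [Ioo_mem_nhdsGT_of_mem (left_mem_Ico.2 one_pos)] with y hy
      rw [pdy_eq x hy.1 hy.2, ← sqrt_mul_aY hy.1]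
      push_cast
      ring
    rw [tendsto_congr' hEv]
    have l1 : Tendsto (fun y : ℝ =>
          -(Real.sqrt x*Real.sqrt y/(2*Real.sqrt (1-y)) + Real.sqrt (1-x)/2))
        (𝓝[>] (0:ℝ)) (𝓝 (-(Real.sqrt (1-x)/2))) := by
      have hc : ContinuousAt (fun y : ℝ =>
          -(Real.sqrt x*Real.sqrt y/(2*Real.sqrt (1-y)) + Real.sqrt (1-x)/2)) 0 := by
        apply ContinuousAt.neg
        apply ContinuousAt.add _ continuousAt_const
        apply ContinuousAt.div
        · exact continuousAt_const.mul Real.continuous_sqrt.continuousAt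
        · exact continuousAt_const.mul
            (Real.continuous_sqrt.continuousAt.comp
              (continuous_const.sub continuous_id).continuousAt)
        · norm_num
      have := hc.tendsto.mono_left (nhdsWithin_le_nhds : 𝓝[>] (0:ℝ) ≤ 𝓝 0)
      simpa using this
    have l2 : Tendsto (fun y : ℝ => uu x y) (𝓝[>] (0:ℝ)) (𝓝 (Real.sqrt x)) := by
      have hc : ContinuousAt (fun y : ℝ => uu x y) 0 := by
        unfold uu
        exact (continuousAt_const.mul (Real.continuous_sqrt.continuousAt.comp
          (continuous_const.sub continuous_id).continuousAt)).sub
          (Real.continuous_sqrt.continuousAt.mul continuousAt_const)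
      have := hc.tendsto.mono_left (nhdsWithin_le_nhds : 𝓝[>] (0:ℝ) ≤ 𝓝 0)
      simpa [uu] using this
    have T : Tendsto (fun y : ℝ => -2*Complex.I
          *((-(Real.sqrt x*Real.sqrt y/(2*Real.sqrt (1-y)) + Real.sqrt (1-x)/2) : ℝ):ℂ)
          /(1+Complex.I*((uu x y : ℝ):ℂ))^2) (𝓝[>] (0:ℝ))
        (𝓝 (-2*Complex.I*((-(Real.sqrt (1-x)/2) : ℝ):ℂ)
          /(1+Complex.I*((Real.sqrt x : ℝ):ℂ))^2)) := by
      apply Tendsto.div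
      · exact tendsto_const_nhds.mul ((Complex.continuous_ofReal.tendsto _).comp l1)
      · exact (tendsto_const_nhds.add
          (tendsto_const_nhds.mul ((Complex.continuous_ofReal.tendsto _).comp l2))).pow 2
      · exact pow_ne_zero _ (den_ne _)
    have hval : -(Complex.I * ((Real.sqrt (1-x) : ℝ):ℂ))/(Complex.I - ((Real.sqrt x : ℝ):ℂ))^2
        = -2*Complex.I*((-(Real.sqrt (1-x)/2) : ℝ):ℂ)/(1+Complex.I*((Real.sqrt x : ℝ):ℂ))^2 := by
      have hI : Complex.I - ((Real.sqrt x : ℝ):ℂ) ≠ 0 := by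
        intro h
        have := congrArg Complex.im h
        simp at this
      rw [div_eq_div_iff (pow_ne_zero 2 hI) (pow_ne_zero 2 (den_ne _))]
      push_cast
      linear_combination (-(Complex.I*((Real.sqrt (1-x) : ℝ):ℂ)
        *(1+((Real.sqrt x : ℝ):ℂ)^2))) * Complex.I_sq
    rw [hval]
    exact T

end
end

section
/- Let n ≥ 2 be an integer, α ∈ [0,1), and let ℰ be a C^n-solution of the Goursat problem for the hyperbolic Ernst equation in D with data {ℰ0, ℰ1} satisfying the data assumptions. Fix k ∈ ℂ ∖ [0,1] and define U(x,y,k) and V(x,y,k) as in the Lax pair, and let Φ(·,·,k) : D → ℂ^{2×2} be the unique continuous solution of Φ(x,y,k) = Φ0(x,k) + ∫_0^y V(x,y',k) Φ(x,y',k) dy', where Φ0(·,k) is the unique continuous solution of Φ0(x,k) = I + ∫_0^x U(x',0,k) Φ0(x',k) dx'. Then det Φ(x,y,k) = Re ℰ(x,y) > 0 for all (x,y) ∈ D; in particular Φ(x,y,k) is invertible for all (x,y) ∈ D. -/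
open Complex Set MeasureTheory Topology Filter ComplexConjugate

noncomputable section

lemma key1 {c : ℝ} (F G : ℝ → ℂ) (a : ℝ → ℂ)
    (hF : ContinuousOn F (Ico 0 c)) (hG : ContinuousOn G (Ico 0 c))
    (hGne : ∀ y ∈ Ico (0:ℝ) c, G y ≠ 0)
    (hF' : ∀ y ∈ Ioo (0:ℝ) c, HasDerivAt F (a y * F y) y)
    (hG' : ∀ y ∈ Ioo (0:ℝ) c, HasDerivAt G (a y * G y) y)
    (h0 : F 0 = G 0) : ∀ y ∈ Ico (0:ℝ) c, F y = G y := by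
  intro y hy
  rcases eq_or_lt_of_le hy.1 with h|hypos
  · rw [← h]; exact h0
  set R : ℝ → ℂ := fun t => F t / G t with hR
  have hRcont : ContinuousOn R (Ico 0 c) := hF.div hG hGne
  have hconst : ∀ ε ∈ Ioc (0:ℝ) y, R y = R ε := by
    intro ε hε
    have hsub : Icc ε y ⊆ Ico 0 c := fun t ht => ⟨le_trans hε.1.le ht.1, lt_of_le_of_lt ht.2 hy.2⟩
    have hsub2 : Icc ε y ⊆ Ioo 0 c := fun t ht => ⟨lt_of_lt_of_le hε.1 ht.1, lt_of_le_of_lt ht.2 hy.2⟩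
    exact constant_of_has_deriv_right_zero (f := R) (a := ε) (b := y)
      (hRcont.mono hsub) (by
        intro t ht
        have htm : t ∈ Ioo (0:ℝ) c := hsub2 ⟨ht.1, ht.2.le⟩
        have hd : HasDerivAt R ((a t * F t * G t - F t * (a t * G t)) / (G t)^2) t :=
          (hF' t htm).div (hG' t htm) (hGne t (Ioo_subset_Ico_self htm))
        have hz : (a t * F t * G t - F t * (a t * G t)) / (G t)^2 = 0 := by ring_nf
        rw [hz] at hd
        exact hd.hasDerivWithinAt) y ⟨hε.2, le_refl y⟩
  have hR0 : R y = R 0 := by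
    have hnb : (𝓝[Ioo (0:ℝ) y] (0:ℝ)).NeBot := by
      rw [← mem_closure_iff_nhdsWithin_neBot, closure_Ioo (ne_of_lt hypos)]
      exact ⟨le_refl _, hypos.le⟩
    have hsub : Ioo (0:ℝ) y ⊆ Ico 0 c := fun t ht => ⟨ht.1.le, lt_trans ht.2 hy.2⟩
    have htend : Tendsto R (𝓝[Ioo (0:ℝ) y] 0) (𝓝 (R 0)) :=
      ((hRcont 0 ⟨le_refl _, lt_of_lt_of_le hypos hy.2.le⟩).mono hsub).tendsto
    have heq : R =ᶠ[𝓝[Ioo (0:ℝ) y] 0] fun _ => R y := by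
      filter_upwards [self_mem_nhdsWithin] with t ht
      exact (hconst t ⟨ht.1, ht.2.le⟩).symm
    exact tendsto_nhds_unique (Tendsto.congr' heq.symm tendsto_const_nhds) htend
  have h1 : R 0 = 1 := by
    simp only [hR, h0]
    exact div_self (hGne 0 ⟨le_refl _, lt_trans hypos hy.2⟩)
  have : F y / G y = 1 := by rw [← h1, ← hR0]
  exact (div_eq_one_iff_eq (hGne y hy)).mp this

lemma main1D {c α : ℝ} (hα : α ∈ Ico (0:ℝ) 1)
    (e q L : ℝ → ℂ) (Φ : ℝ → Matrix (Fin 2) (Fin 2) ℂ) (Φi : Matrix (Fin 2) (Fin 2) ℂ)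
    (Vm : ℝ → Matrix (Fin 2) (Fin 2) ℂ)
    (he : ContinuousOn e (Ico 0 c))
    (hepos : ∀ t ∈ Ico (0:ℝ) c, 0 < (e t).re)
    (hq : ∀ t ∈ Ioo (0:ℝ) c, HasDerivAt e (q t) t)
    (hqc : ContinuousOn q (Ioo 0 c))
    (hqb : ∀ y ∈ Ioo (0:ℝ) c, ∃ M, ∀ t ∈ Ioc (0:ℝ) y, ‖q t‖ ≤ M * t ^ (-α))
    (hLc : ContinuousOn L (Ioo 0 c))
    (hLb : ∀ y ∈ Ioo (0:ℝ) c, ∃ M, ∀ t ∈ Ioc (0:ℝ) y, ‖L t‖ ≤ M)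
    (hVm : ∀ t ∈ Ioo (0:ℝ) c, Vm t = (1 / (2 * ((e t).re : ℂ))) •
        !![conj (q t), L t * conj (q t); L t * q t, q t])
    (hΦc : ∀ i j, ContinuousOn (fun y => Φ y i j) (Ico 0 c))
    (hΦeq : ∀ y ∈ Ico (0:ℝ) c, ∀ i j, Φ y i j = Φi i j + ∫ t in (0:ℝ)..y, (Vm t * Φ t) i j)
    (hdet : Φi.det = ((e 0).re : ℂ)) :
    ∀ y ∈ Ico (0:ℝ) c, (Φ y).det = ((e y).re : ℂ) := by
  intro y₀ hy₀
  have hc0 : 0 < c := lt_of_le_of_lt hy₀.1 hy₀.2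
  have hrne : ∀ t ∈ Ico (0:ℝ) c, ((e t).re : ℂ) ≠ 0 := fun t ht => by
    exact_mod_cast ne_of_gt (hepos t ht)
  -- continuity of the coefficient 1/(2 Re e)
  have hrc : ContinuousOn (fun t => 1 / (2 * ((e t).re : ℂ))) (Ioo 0 c) := by
    apply ContinuousOn.div continuousOn_const
    · exact continuousOn_const.mul ((Complex.continuous_ofReal.comp_continuousOn
        (Complex.continuous_re.comp_continuousOn (he.mono Ioo_subset_Ico_self))))
    · intro t ht
      have := hrne t (Ioo_subset_Ico_self ht)
      simpa using this
  have hcq : ContinuousOn (fun t => conj (q t)) (Ioo 0 c) := hqc.star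
  -- continuity of entries of Vm
  have hVce : ∀ i l, ContinuousOn (fun t => Vm t i l) (Ioo 0 c) := by
    intro i l
    fin_cases i <;> fin_cases l
    · exact (hrc.mul hcq).congr fun t ht => by rw [hVm t ht]; simp [Matrix.smul_apply]
    · exact (hrc.mul (hLc.mul hcq)).congr fun t ht => by rw [hVm t ht]; simp [Matrix.smul_apply]
    · exact (hrc.mul (hLc.mul hqc)).congr fun t ht => by rw [hVm t ht]; simp [Matrix.smul_apply]
    · exact (hrc.mul hqc).congr fun t ht => by rw [hVm t ht]; simp [Matrix.smul_apply]
  -- integrand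
  set h : Fin 2 → Fin 2 → ℝ → ℂ := fun i j t => (Vm t * Φ t) i j with hh
  have hhc : ∀ i j, ContinuousOn (h i j) (Ioo 0 c) := by
    intro i j
    have : ContinuousOn (fun t => Vm t i 0 * Φ t 0 j + Vm t i 1 * Φ t 1 j) (Ioo 0 c) :=
      ((hVce i 0).mul ((hΦc 0 j).mono Ioo_subset_Ico_self)).add
        ((hVce i 1).mul ((hΦc 1 j).mono Ioo_subset_Ico_self))
    exact this.congr fun t ht => by simp [hh, Matrix.mul_apply, Fin.sum_univ_two]
  -- interval integrability
  have hInt : ∀ i j, ∀ y ∈ Ioo (0:ℝ) c, IntervalIntegrable (h i j) volume 0 y := by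
    intro i j y hy
    rw [intervalIntegrable_iff_integrableOn_Ioc_of_le hy.1.le]
    obtain ⟨Mq, hMq⟩ := hqb y hy
    obtain ⟨ML, hML⟩ := hLb y hy
    have hIccsub : Icc (0:ℝ) y ⊆ Ico 0 c := fun t ht => ⟨ht.1, lt_of_le_of_lt ht.2 hy.2⟩
    have hIocsub : Ioc (0:ℝ) y ⊆ Ioo 0 c := fun t ht => ⟨ht.1, lt_of_le_of_lt ht.2 hy.2⟩
    obtain ⟨t0, ht0, hmin⟩ := (isCompact_Icc (a := (0:ℝ)) (b := y)).exists_isMinOn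
      ⟨0, le_refl _, hy.1.le⟩
      (Complex.continuous_re.comp_continuousOn (he.mono hIccsub))
    set δ := (e t0).re with hδ
    have hδpos : 0 < δ := hepos t0 (hIccsub ht0)
    obtain ⟨M0, hM0⟩ := (isCompact_Icc (a := (0:ℝ)) (b := y)).exists_bound_of_continuousOn
      ((hΦc 0 j).mono hIccsub)
    obtain ⟨M1, hM1⟩ := (isCompact_Icc (a := (0:ℝ)) (b := y)).exists_bound_of_continuousOn
      ((hΦc 1 j).mono hIccsub)
    set MΦ := max (max M0 M1) 0 with hMΦ
    set ML' := max ML 0 + 1 with hML'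
    set K := (1 / (2*δ)) * ML' * Mq * MΦ * 2 with hK
    -- bound on entries of Vm
    have hVb : ∀ t ∈ Ioc (0:ℝ) y, ∀ i' l, ‖Vm t i' l‖ ≤ (1/(2*δ)) * ML' * (Mq * t ^ (-α)) := by
      intro t ht i' l
      have htIoo := hIocsub ht
      have hret : 0 < (e t).re := hepos t (Ioo_subset_Ico_self htIoo)
      have hnr : ‖(1 / (2 * ((e t).re : ℂ)))‖ = 1 / (2 * (e t).re) := by
        rw [norm_div, norm_one, norm_mul]
        simp [Complex.norm_real, abs_of_pos hret]
      have h2 : δ ≤ (e t).re := hmin ⟨ht.1.le, ht.2⟩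
      have hrle : 1 / (2 * (e t).re) ≤ 1 / (2 * δ) :=
        one_div_le_one_div_of_le (by linarith) (by linarith)
      have hqt : ‖q t‖ ≤ Mq * t ^ (-α) := hMq t ht
      have hqt0 : (0:ℝ) ≤ Mq * t ^ (-α) := le_trans (norm_nonneg _) hqt
      have hLt : ‖L t‖ ≤ ML' := by
        rw [hML']
        have h3 := hML t ht
        have h4 := le_max_left ML (0:ℝ)
        linarith
      have hML'1 : (1:ℝ) ≤ ML' := by
        rw [hML']
        have h4 := le_max_right ML (0:ℝ)
        linarith
      have hML'0 : (0:ℝ) ≤ ML' := by linarith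
      have key : ∀ w : ℂ, ‖w‖ ≤ ML' * ‖q t‖ →
          ‖(1 / (2 * ((e t).re : ℂ))) * w‖ ≤ 1/(2*δ) * ML' * (Mq * t ^ (-α)) := by
        intro w hw
        rw [norm_mul, hnr]
        have hw2 : ‖w‖ ≤ ML' * (Mq * t ^ (-α)) :=
          le_trans hw (mul_le_mul_of_nonneg_left hqt hML'0)
        calc 1 / (2 * (e t).re) * ‖w‖ ≤ 1/(2*δ) * (ML' * (Mq * t ^ (-α))) :=
              mul_le_mul hrle hw2 (norm_nonneg _) (by positivity)
          _ = 1/(2*δ) * ML' * (Mq * t ^ (-α)) := by ring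
      fin_cases i' <;> fin_cases l <;>
        rw [hVm t htIoo] <;>
        simp only [Fin.mk_zero, Fin.mk_one, Fin.isValue, Matrix.smul_apply, smul_eq_mul,
          Matrix.cons_val', Matrix.cons_val_zero,
          Matrix.cons_val_one, Matrix.head_cons, Matrix.head_fin_const, Matrix.empty_val',
          Matrix.cons_val_fin_one]
      · refine key _ ?_
        show ‖conj (q t)‖ ≤ ML' * ‖q t‖
        rw [RCLike.norm_conj]
        exact le_mul_of_one_le_left (norm_nonneg _) hML'1
      · refine key _ ?_
        show ‖L t * conj (q t)‖ ≤ ML' * ‖q t‖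
        rw [norm_mul, RCLike.norm_conj]
        exact mul_le_mul_of_nonneg_right hLt (norm_nonneg _)
      · refine key _ ?_
        show ‖L t * q t‖ ≤ ML' * ‖q t‖
        rw [norm_mul]
        exact mul_le_mul_of_nonneg_right hLt (norm_nonneg _)
      · refine key _ ?_
        show ‖q t‖ ≤ ML' * ‖q t‖
        exact le_mul_of_one_le_left (norm_nonneg _) hML'1
    -- the dominating function is integrable
    have hgi : IntegrableOn (fun t => K * t ^ (-α)) (Ioc 0 y) volume := by
      have h1 : IntervalIntegrable (fun t : ℝ => t ^ (-α)) volume 0 y :=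
        intervalIntegral.intervalIntegrable_rpow' (by linarith [hα.2])
      have h2 := h1.const_mul K
      rwa [intervalIntegrable_iff_integrableOn_Ioc_of_le hy.1.le] at h2
    apply Integrable.mono' hgi
      (((hhc i j).mono hIocsub).aestronglyMeasurable measurableSet_Ioc)
    rw [ae_restrict_iff' measurableSet_Ioc]
    filter_upwards with t ht
    have hΦb : ∀ l : Fin 2, ‖Φ t l j‖ ≤ MΦ := by
      intro l
      fin_cases l
      · exact le_trans (hM0 t ⟨ht.1.le, ht.2⟩) (le_trans (le_max_left M0 M1) (le_max_left _ 0))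
      · exact le_trans (hM1 t ⟨ht.1.le, ht.2⟩) (le_trans (le_max_right M0 M1) (le_max_left _ 0))
    have hB := hVb t ht
    have hMΦ0 : (0:ℝ) ≤ MΦ := le_max_right _ 0
    have hexp : h i j t = Vm t i 0 * Φ t 0 j + Vm t i 1 * Φ t 1 j := by
      simp [hh, Matrix.mul_apply, Fin.sum_univ_two]
    rw [hexp]
    have hb0 : (0:ℝ) ≤ (1/(2*δ)) * ML' * (Mq * t ^ (-α)) := le_trans (norm_nonneg _) (hB 0 0)
    calc ‖Vm t i 0 * Φ t 0 j + Vm t i 1 * Φ t 1 j‖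
        ≤ ‖Vm t i 0‖ * ‖Φ t 0 j‖ + ‖Vm t i 1‖ * ‖Φ t 1 j‖ := by
          refine le_trans (norm_add_le _ _) ?_
          rw [norm_mul, norm_mul]
      _ ≤ ((1/(2*δ)) * ML' * (Mq * t ^ (-α))) * MΦ + ((1/(2*δ)) * ML' * (Mq * t ^ (-α))) * MΦ := by
          gcongr
          exacts [hB i 0, hΦb 0, hB i 1, hΦb 1]
      _ = K * t ^ (-α) := by rw [hK]; ring
  -- derivative of the entries
  have hder : ∀ i j, ∀ y ∈ Ioo (0:ℝ) c, HasDerivAt (fun u => Φ u i j) (h i j y) y := by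
    intro i j y hy
    have hmem : Ioo (0:ℝ) c ∈ 𝓝 y := isOpen_Ioo.mem_nhds hy
    have hca : ContinuousAt (h i j) y := (hhc i j).continuousAt hmem
    have hsm : StronglyMeasurableAtFilter (h i j) (𝓝 y) volume :=
      ⟨Ioo 0 c, hmem, (hhc i j).aestronglyMeasurable measurableSet_Ioo⟩
    have hd0 : HasDerivAt (fun u => Φi i j + ∫ t in (0:ℝ)..u, h i j t) (h i j y) y :=
      (intervalIntegral.integral_hasDerivAt_right (hInt i j y hy) hsm hca).const_add (Φi i j)
    apply hd0.congr_of_eventuallyEq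
    filter_upwards [hmem] with t ht
    exact hΦeq t (Ioo_subset_Ico_self ht) i j
  -- set up key1
  set F : ℝ → ℂ := fun u => (Φ u).det with hF
  set G : ℝ → ℂ := fun u => ((e u).re : ℂ) with hG
  set a : ℝ → ℂ := fun t => ((q t).re : ℂ) / ((e t).re : ℂ) with ha
  have hFc : ContinuousOn F (Ico 0 c) := by
    have h1 := (((hΦc 0 0).mul (hΦc 1 1)).sub ((hΦc 0 1).mul (hΦc 1 0)))
    exact h1.congr fun u hu => Matrix.det_fin_two _
  have hGc : ContinuousOn G (Ico 0 c) :=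
    Complex.continuous_ofReal.comp_continuousOn (Complex.continuous_re.comp_continuousOn he)
  have hGne : ∀ u ∈ Ico (0:ℝ) c, G u ≠ 0 := fun u hu => hrne u hu
  have hF' : ∀ y ∈ Ioo (0:ℝ) c, HasDerivAt F (a y * F y) y := by
    intro y hy
    have hd := ((hder 0 0 y hy).mul (hder 1 1 y hy)).sub ((hder 0 1 y hy).mul (hder 1 0 y hy))
    have hFeq : F = fun u => Φ u 0 0 * Φ u 1 1 - Φ u 0 1 * Φ u 1 0 :=
      funext fun u => Matrix.det_fin_two _
    rw [hFeq]
    refine hd.congr_deriv ?_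
    have hre : ((e y).re : ℂ) ≠ 0 := hrne y (Ioo_subset_Ico_self hy)
    have hconj : conj (q y) = 2*(((q y).re : ℝ):ℂ) - q y := by
      have hac := Complex.add_conj (q y)
      push_cast at hac
      linear_combination hac
    have entry : ∀ i j : Fin 2, h i j y =
        1 / (2 * ((e y).re : ℂ)) *
          (!![conj (q y), L y * conj (q y); L y * q y, q y] i 0 * Φ y 0 j +
           !![conj (q y), L y * conj (q y); L y * q y, q y] i 1 * Φ y 1 j) := by
      intro i j
      fin_cases i <;> fin_cases j <;>
        (simp only [hh]; rw [hVm y hy];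
         simp [Matrix.mul_apply, Fin.sum_univ_two, Matrix.smul_apply, smul_eq_mul,
           Fin.mk_zero, Fin.mk_one, Fin.isValue]; try ring)
    rw [entry 0 0, entry 1 1, entry 0 1, entry 1 0]
    simp only [Matrix.of_apply, Matrix.cons_val', Matrix.cons_val_zero, Matrix.cons_val_one,
      Matrix.head_cons, Matrix.head_fin_const, Matrix.empty_val', Matrix.cons_val_fin_one]
    simp only [ha, hF, Matrix.det_fin_two]
    rw [hconj]
    field_simp
    ring
  have hG' : ∀ y ∈ Ioo (0:ℝ) c, HasDerivAt G (a y * G y) y := by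
    intro y hy
    have h2 : HasDerivAt (fun u => (e u).re) ((q y).re) y :=
      Complex.reCLM.hasFDerivAt.comp_hasDerivAt y (hq y hy)
    have h1 : HasDerivAt G (((q y).re : ℂ)) y :=
      Complex.ofRealCLM.hasFDerivAt.comp_hasDerivAt y h2
    convert h1 using 1
    have hre : ((e y).re : ℂ) ≠ 0 := hrne y (Ioo_subset_Ico_self hy)
    simp only [ha, hG]
    exact div_mul_cancel₀ _ hre
  have hF0 : F 0 = G 0 := by
    have h00 : ∀ i j, Φ 0 i j = Φi i j := fun i j => by
      rw [hΦeq 0 ⟨le_refl _, hc0⟩ i j, intervalIntegral.integral_same, add_zero]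
    simp only [hF, hG]
    rw [Matrix.det_fin_two, h00, h00, h00, h00, ← Matrix.det_fin_two, hdet]
  exact key1 F G a hFc hGc hGne hF' hG' hF0 y₀ hy₀

lemma ratio_slit {k : ℂ} (hk : k ∉ seg01) {x d : ℝ} (hx : x ∈ Icc (0:ℝ) 1)
    (hd : d ∈ Icc (0:ℝ) 1) :
    ((k - (d:ℂ)) / (k - (x:ℂ))) ∈ Complex.slitPlane ∧ (k - (d:ℂ)) / (k - (x:ℂ)) ≠ 0 := by
  have hknr : ∀ t : ℝ, t ∈ Icc (0:ℝ) 1 → k ≠ (t:ℂ) := fun t ht h => hk ⟨t, ht, h.symm⟩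
  have hkx : k - (x:ℂ) ≠ 0 := sub_ne_zero.mpr (hknr x hx)
  have hkd : k - (d:ℂ) ≠ 0 := sub_ne_zero.mpr (hknr d hd)
  refine ⟨?_, div_ne_zero hkd hkx⟩
  rw [Complex.mem_slitPlane_iff]
  by_contra hcon
  push_neg at hcon
  obtain ⟨hre, him⟩ := hcon
  set w := (k - (d:ℂ)) / (k - (x:ℂ)) with hw
  set r := w.re with hr
  have hwr : w = (r:ℂ) := Complex.ext rfl him
  have h1 : k - (d:ℂ) = w * (k - (x:ℂ)) := (div_eq_iff hkx).mp rfl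
  have h1r : 0 < 1 - r := by linarith
  have h2 : k = (((d - r*x)/(1-r) : ℝ) : ℂ) := by
    rw [hwr] at h1
    have h1rC : ((1 - r : ℝ) : ℂ) ≠ 0 := by
      exact_mod_cast ne_of_gt h1r
    have h3 : k * ((1 - r : ℝ):ℂ) = ((d - r*x : ℝ):ℂ) := by
      push_cast
      linear_combination h1
    rw [Complex.ofReal_div, eq_div_iff h1rC]
    exact h3
  apply hk
  refine ⟨(d - r*x)/(1-r), ⟨?_, ?_⟩, h2.symm⟩
  · apply div_nonneg _ h1r.le
    nlinarith [hd.1, hx.1]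
  · rw [div_le_one h1r]
    nlinarith [hd.2, hx.2]

lemma lam_cont_ne {k : ℂ} (hk : k ∉ seg01) {x : ℝ} (hx : x ∈ Icc (0:ℝ) 1) {s : Set ℝ}
    (hs : ∀ t ∈ s, 1 - t ∈ Icc (0:ℝ) 1) :
    ContinuousOn (fun t => lam x t k) s ∧ ∀ t ∈ s, lam x t k ≠ 0 := by
  have hknr : ∀ t : ℝ, t ∈ Icc (0:ℝ) 1 → k ≠ (t:ℂ) := fun t ht h => hk ⟨t, ht, h.symm⟩
  have hbc : Continuous (fun t : ℝ => (k - (1 - (t:ℂ))) / (k - (x:ℂ))) := by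
    apply Continuous.div_const
    exact continuous_const.sub (continuous_const.sub Complex.continuous_ofReal)
  have hmem : ∀ t ∈ s, (k - (1 - (t:ℂ))) / (k - (x:ℂ)) ∈ Complex.slitPlane ∧
      (k - (1 - (t:ℂ))) / (k - (x:ℂ)) ≠ 0 := by
    intro t ht
    have := ratio_slit hk hx (hs t ht)
    have hcast : ((1 - t : ℝ) : ℂ) = 1 - (t:ℂ) := by push_cast; ring
    rw [hcast] at this
    exact this
  constructor
  · exact ContinuousOn.cpow hbc.continuousOn continuousOn_const (fun t ht => (hmem t ht).1)
  · intro t ht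
    rw [lam, Complex.cpow_def_of_ne_zero (hmem t ht).2]
    exact Complex.exp_ne_zero _

lemma lam0_cont_ne {k : ℂ} (hk : k ∉ seg01) {s : Set ℝ} (hs : ∀ t ∈ s, t ∈ Icc (0:ℝ) 1) :
    ContinuousOn (fun t => lam t 0 k) s ∧ ∀ t ∈ s, lam t 0 k ≠ 0 := by
  have hknr : ∀ t : ℝ, t ∈ Icc (0:ℝ) 1 → k ≠ (t:ℂ) := fun t ht h => hk ⟨t, ht, h.symm⟩
  have hmem : ∀ t ∈ s, (k - (1 - ((0:ℝ):ℂ))) / (k - (t:ℂ)) ∈ Complex.slitPlane ∧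
      (k - (1 - ((0:ℝ):ℂ))) / (k - (t:ℂ)) ≠ 0 := by
    intro t ht
    have := ratio_slit hk (hs t ht) (by norm_num : (1:ℝ) ∈ Icc (0:ℝ) 1)
    have hcast : ((1:ℝ):ℂ) = 1 - ((0:ℝ):ℂ) := by push_cast; ring
    rw [hcast] at this
    exact this
  constructor
  · have hbc : ContinuousOn (fun t : ℝ => (k - (1 - ((0:ℝ):ℂ))) / (k - (t:ℂ))) s := by
      apply ContinuousOn.div continuousOn_const
        ((continuous_const.sub Complex.continuous_ofReal).continuousOn)
      exact fun t ht => sub_ne_zero.mpr (hknr t (hs t ht))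
    exact ContinuousOn.cpow hbc continuousOn_const (fun t ht => (hmem t ht).1)
  · intro t ht
    rw [lam, Complex.cpow_def_of_ne_zero (hmem t ht).2]
    exact Complex.exp_ne_zero _


lemma boundary1D {n : ℕ} {α : ℝ} (hn : 2 ≤ n) (hα : α ∈ Ico (0:ℝ) 1)
    (E0 : ℝ → ℂ) (hd0 : ErnstData n α E0) (e : ℝ → ℂ)
    (hbc : ∀ t ∈ Ico (0:ℝ) 1, e t = E0 t) :
    (∀ t ∈ Ioo (0:ℝ) 1, HasDerivAt e (deriv e t) t) ∧
    ContinuousOn (fun t => deriv e t) (Ioo 0 1) ∧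
    (∀ y ∈ Ioo (0:ℝ) 1, ∃ M, ∀ t ∈ Ioc (0:ℝ) y, ‖deriv e t‖ ≤ M * t ^ (-α)) := by
  obtain ⟨hc0, hcd, ⟨g, hgc, hgeq⟩, hE00, hpos⟩ := hd0
  have hone : (1:ℕ) ≤ n := by omega
  have heq : ∀ t ∈ Ioo (0:ℝ) 1, e =ᶠ[𝓝 t] E0 := by
    intro t ht
    filter_upwards [isOpen_Ioo.mem_nhds ht] with s hs
    exact hbc s (Ioo_subset_Ico_self hs)
  have hderiv : ∀ t ∈ Ioo (0:ℝ) 1, deriv e t = deriv E0 t := fun t ht => (heq t ht).deriv_eq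
  have hdiff : ∀ t ∈ Ioo (0:ℝ) 1, HasDerivAt E0 (deriv E0 t) t := by
    intro t ht
    exact ((hcd.contDiffAt (isOpen_Ioo.mem_nhds ht)).differentiableAt
      (by exact_mod_cast (show n ≠ 0 by omega))).hasDerivAt
  refine ⟨?_, ?_, ?_⟩
  · intro t ht
    have h1 : HasDerivAt e (deriv E0 t) t := (hdiff t ht).congr_of_eventuallyEq (heq t ht)
    rwa [← hderiv t ht] at h1
  · exact (hcd.continuousOn_deriv_of_isOpen isOpen_Ioo (by exact_mod_cast hone)).congr hderiv
  · intro y hy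
    obtain ⟨M, hM⟩ := (isCompact_Icc (a := (0:ℝ)) (b := y)).exists_bound_of_continuousOn
      (hgc.mono (fun t ht => ⟨ht.1, lt_of_le_of_lt ht.2 hy.2⟩))
    refine ⟨M, fun t ht => ?_⟩
    have htI : t ∈ Ioo (0:ℝ) 1 := ⟨ht.1, lt_of_le_of_lt ht.2 hy.2⟩
    have hrp : (0:ℝ) < t ^ α := Real.rpow_pos_of_pos ht.1 α
    have hgt := hgeq t htI
    have hnorm : ‖g t‖ = t ^ α * ‖deriv E0 t‖ := by
      rw [hgt, norm_mul, Complex.norm_real, Real.norm_eq_abs, abs_of_pos hrp]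
    rw [hderiv t htI, Real.rpow_neg ht.1.le, ← div_eq_mul_inv, le_div_iff₀ hrp]
    calc ‖deriv E0 t‖ * t ^ α = ‖g t‖ := by rw [hnorm]; ring
      _ ≤ M := hM t ⟨ht.1.le, ht.2⟩

/-- The determinant of the eigenfunction Φ of the Lax pair equals
Re ℰ(x,y) > 0 on D; in particular Φ(x,y,k) is invertible on D. -/
theorem volterra_eigenfunction_det
    (n : ℕ) (hn : 2 ≤ n) (α : ℝ) (hα : α ∈ Ico (0:ℝ) 1)
    (E0 E1 : ℝ → ℂ) (hd0 : ErnstData n α E0) (hd1 : ErnstData n α E1)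
    (E : ℝ → ℝ → ℂ) (hE : ErnstSolutionWith n α E E0 E1)
    (k : ℂ) (hk : k ∉ seg01)
    (Φ0 : ℝ → Matrix (Fin 2) (Fin 2) ℂ)
    (hΦ0c : ContinuousOn Φ0 (Ico 0 1))
    (hΦ0eq : ∀ x ∈ Ico (0:ℝ) 1, ∀ i j, Φ0 x i j =
      (1 : Matrix (Fin 2) (Fin 2) ℂ) i j + ∫ t in (0:ℝ)..x, (Umat E k t 0 * Φ0 t) i j)
    (Φ : ℝ → ℝ → Matrix (Fin 2) (Fin 2) ℂ)
    (hΦc : ContinuousOn (fun p : ℝ × ℝ => Φ p.1 p.2) TriD)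
    (hΦeq : ∀ p ∈ TriD, ∀ i j, Φ p.1 p.2 i j =
      Φ0 p.1 i j + ∫ t in (0:ℝ)..p.2, (Vmat E k p.1 t * Φ p.1 t) i j) :
    ∀ p ∈ TriD,
      (Φ p.1 p.2).det = ((E p.1 p.2).re : ℂ) ∧
      0 < (E p.1 p.2).re ∧
      IsUnit (Φ p.1 p.2) := by
  obtain ⟨hEc, hEcd, _hEeq, hgx, hgy, _hgxy, hbc0, hbc1, hEpos⟩ := hE
  have hone : (1:ℕ) ≤ n := by omega
  have hO : {p : ℝ × ℝ | 0 < p.1 ∧ 0 < p.2 ∧ p.1 + p.2 < 1} ⊆ interior TriD := by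
    apply interior_maximal
    · intro q hq; exact ⟨hq.1.le, hq.2.1.le, hq.2.2⟩
    · exact (isOpen_lt continuous_const continuous_fst).and
        ((isOpen_lt continuous_const continuous_snd).and
          (isOpen_lt (continuous_fst.add continuous_snd) continuous_const))
  have hentry : ∀ (i j : Fin 2), Continuous (fun M : Matrix (Fin 2) (Fin 2) ℂ => M i j) :=
    fun i j => (continuous_apply j).comp (continuous_apply i)
  -- Part A : the determinant of Φ0
  have hA : ∀ x ∈ Ico (0:ℝ) 1, (Φ0 x).det = ((E x 0).re : ℂ) := by
    obtain ⟨hqdA, hqcA, hqbA⟩ := boundary1D hn hα E0 hd0 (fun s => E s 0)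
      (fun t ht => hbc0 t ht)
    have hmapA : ∀ t ∈ Ico (0:ℝ) 1, ((t, (0:ℝ)) : ℝ×ℝ) ∈ TriD := fun t ht =>
      ⟨ht.1, le_refl _, by simpa using ht.2⟩
    have heA : ContinuousOn (fun t => E t 0) (Ico 0 1) :=
      hEc.comp ((continuous_id.prodMk continuous_const).continuousOn)
        (fun t ht => hmapA t ht)
    have heposA : ∀ t ∈ Ico (0:ℝ) 1, 0 < (E t 0).re := fun t ht => hEpos (t,0) (hmapA t ht)
    obtain ⟨hLcA, _⟩ := lam0_cont_ne hk (s := Ico (0:ℝ) 1) (fun t ht => ⟨ht.1, ht.2.le⟩)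
    have hLbA : ∀ y ∈ Ioo (0:ℝ) 1, ∃ M, ∀ t ∈ Ioc (0:ℝ) y, ‖lam t 0 k‖ ≤ M := by
      intro y hy
      obtain ⟨hc, _⟩ := lam0_cont_ne hk (s := Icc (0:ℝ) 0 ∪ Icc 0 y)
        (fun t ht => by
          rcases ht with ht|ht
          · exact ⟨ht.1, by linarith [ht.2, hy.1.le]⟩
          · exact ⟨ht.1, by linarith [ht.2, hy.2.le]⟩)
      obtain ⟨M, hM⟩ := (isCompact_Icc (a := (0:ℝ)) (b := y)).exists_bound_of_continuousOn
        (hc.mono (fun t ht => Or.inr ht))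
      exact ⟨M, fun t ht => hM t ⟨ht.1.le, ht.2⟩⟩
    have hdetA : (1 : Matrix (Fin 2) (Fin 2) ℂ).det = (((E 0 0).re : ℝ) : ℂ) := by
      rw [Matrix.det_one, hbc0 0 ⟨le_refl _, one_pos⟩, hd0.2.2.2.1]
      norm_num
    exact main1D hα (fun t => E t 0) (fun t => deriv (fun s => E s 0) t)
      (fun t => lam t 0 k) Φ0 1 (fun t => Umat E k t 0) heA heposA hqdA hqcA hqbA
      (hLcA.mono Ioo_subset_Ico_self) hLbA (fun t _ => rfl)
      (fun i j => (hentry i j).comp_continuousOn hΦ0c) hΦ0eq hdetA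
  -- Part B
  intro p hp
  obtain ⟨x, y⟩ := p
  have hx0 : (0:ℝ) ≤ x := hp.1
  have hy0 : (0:ℝ) ≤ y := hp.2.1
  have hxy : x + y < 1 := hp.2.2
  have hxI : x ∈ Ico (0:ℝ) 1 := ⟨hx0, by linarith⟩
  have hmapB : ∀ t ∈ Ico (0:ℝ) (1-x), ((x, t) : ℝ×ℝ) ∈ TriD := fun t ht =>
    ⟨hx0, ht.1, by show x + t < 1; have := ht.2; linarith⟩
  have hqfacts : (∀ t ∈ Ioo (0:ℝ) (1-x), HasDerivAt (fun s => E x s)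
        (deriv (fun s => E x s) t) t) ∧
      ContinuousOn (fun t => deriv (fun s => E x s) t) (Ioo 0 (1-x)) ∧
      (∀ y' ∈ Ioo (0:ℝ) (1-x), ∃ M, ∀ t ∈ Ioc (0:ℝ) y',
        ‖deriv (fun s => E x s) t‖ ≤ M * t ^ (-α)) := by
    rcases eq_or_lt_of_le hx0 with hxz|hxpos
    · -- boundary case x = 0
      subst hxz
      rw [show (1:ℝ) - 0 = 1 by norm_num]
      exact boundary1D hn hα E1 hd1 (fun s => E 0 s) (fun t ht => hbc1 t ht)
    · -- interior case 0 < x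
      have hOmem : ∀ t ∈ Ioo (0:ℝ) (1-x), ((x,t) : ℝ×ℝ) ∈ interior TriD := fun t ht =>
        hO ⟨hxpos, ht.1, by have := ht.2; simp only [mem_setOf_eq]; linarith⟩
      have hdiff : ∀ t ∈ Ioo (0:ℝ) (1-x), HasDerivAt (fun s => E x s)
          (fderiv ℝ (fun q : ℝ×ℝ => E q.1 q.2) (x,t) ((0:ℝ),(1:ℝ))) t := by
        intro t ht
        have hfd : DifferentiableAt ℝ (fun q : ℝ×ℝ => E q.1 q.2) (x,t) :=
          (hEcd.contDiffAt (isOpen_interior.mem_nhds (hOmem t ht))).differentiableAt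
            (by exact_mod_cast (show n ≠ 0 by omega))
        have hline : HasDerivAt (fun s : ℝ => ((x:ℝ), s)) ((0:ℝ),(1:ℝ)) t :=
          (hasDerivAt_const t x).prodMk (hasDerivAt_id t)
        exact hfd.hasFDerivAt.comp_hasDerivAt t hline
      refine ⟨?_, ?_, ?_⟩
      · intro t ht
        exact (hdiff t ht).differentiableAt.hasDerivAt
      · have hfdc : ContinuousOn (fderiv ℝ (fun q : ℝ×ℝ => E q.1 q.2)) (interior TriD) :=
          hEcd.continuousOn_fderiv_of_isOpen isOpen_interior (by exact_mod_cast hone)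
        have hcomp : ContinuousOn (fun t => fderiv ℝ (fun q : ℝ×ℝ => E q.1 q.2) (x,t)
            ((0:ℝ),(1:ℝ))) (Ioo 0 (1-x)) := by
          apply ContinuousOn.clm_apply
          · exact hfdc.comp ((continuous_const.prodMk continuous_id).continuousOn)
              (fun t ht => hOmem t ht)
          · exact continuousOn_const
        exact hcomp.congr (fun t ht => (hdiff t ht).deriv)
      · obtain ⟨g, hgc, hgeq⟩ := hgy
        intro y' hy'
        have hgcomp : ContinuousOn (fun t => g (x,t)) (Icc 0 y') :=
          hgc.comp ((continuous_const.prodMk continuous_id).continuousOn)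
            (fun t ht => hmapB t ⟨ht.1, lt_of_le_of_lt ht.2 hy'.2⟩)
        obtain ⟨M, hM⟩ := (isCompact_Icc (a := (0:ℝ)) (b := y')).exists_bound_of_continuousOn
          hgcomp
        refine ⟨M, fun t ht => ?_⟩
        have htI : t ∈ Ioo (0:ℝ) (1-x) := ⟨ht.1, lt_of_le_of_lt ht.2 hy'.2⟩
        have hrp : (0:ℝ) < t ^ α := Real.rpow_pos_of_pos ht.1 α
        have hgt := hgeq (x,t) (hOmem t htI)
        simp only [pdy] at hgt
        have hnorm : ‖g (x,t)‖ = t ^ α * ‖deriv (fun s => E x s) t‖ := by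
          rw [hgt, norm_mul, Complex.norm_real, Real.norm_eq_abs, abs_of_pos hrp]
        rw [Real.rpow_neg ht.1.le, ← div_eq_mul_inv, le_div_iff₀ hrp]
        calc ‖deriv (fun s => E x s) t‖ * t ^ α = ‖g (x,t)‖ := by rw [hnorm]; ring
          _ ≤ M := hM t ⟨ht.1.le, ht.2⟩
  obtain ⟨hqdB, hqcB, hqbB⟩ := hqfacts
  have hxIcc : x ∈ Icc (0:ℝ) 1 := ⟨hxI.1, hxI.2.le⟩
  obtain ⟨hlamC, hlamNe⟩ := lam_cont_ne hk hxIcc (s := Ioo (0:ℝ) (1-x))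
    (fun t ht => ⟨by have := ht.2; linarith, by have := ht.1; linarith⟩)
  have hLcB : ContinuousOn (fun t => (lam x t k)⁻¹) (Ioo 0 (1-x)) := hlamC.inv₀ hlamNe
  have hLbB : ∀ y' ∈ Ioo (0:ℝ) (1-x), ∃ M, ∀ t ∈ Ioc (0:ℝ) y', ‖(lam x t k)⁻¹‖ ≤ M := by
    intro y' hy'
    obtain ⟨hc, hne⟩ := lam_cont_ne hk hxIcc (s := Icc (0:ℝ) y')
      (fun t ht => ⟨by have h1 := ht.2; have h2 := hy'.2; linarith,
                    by have := ht.1; linarith⟩)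
    obtain ⟨M, hM⟩ := (isCompact_Icc (a := (0:ℝ)) (b := y')).exists_bound_of_continuousOn
      (hc.inv₀ hne)
    exact ⟨M, fun t ht => hM t ⟨ht.1.le, ht.2⟩⟩
  have heB : ContinuousOn (fun t => E x t) (Ico 0 (1-x)) :=
    hEc.comp ((continuous_const.prodMk continuous_id).continuousOn) hmapB
  have heposB : ∀ t ∈ Ico (0:ℝ) (1-x), 0 < (E x t).re := fun t ht => hEpos (x,t) (hmapB t ht)
  have hΦcB : ∀ i j, ContinuousOn (fun t => Φ x t i j) (Ico 0 (1-x)) := fun i j =>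
    (hentry i j).comp_continuousOn
      (hΦc.comp ((continuous_const.prodMk continuous_id).continuousOn) hmapB)
  have hΦeqB : ∀ t ∈ Ico (0:ℝ) (1-x), ∀ i j, Φ x t i j =
      Φ0 x i j + ∫ s in (0:ℝ)..t, (Vmat E k x s * Φ x s) i j := fun t ht i j =>
    hΦeq (x,t) (hmapB t ht) i j
  have hmain := main1D hα (fun t => E x t) (fun t => deriv (fun s => E x s) t)
    (fun t => (lam x t k)⁻¹) (fun t => Φ x t) (Φ0 x) (fun t => Vmat E k x t)
    heB heposB hqdB hqcB hqbB hLcB hLbB (fun t _ => rfl) hΦcB hΦeqB (hA x hxI)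
    y ⟨hy0, by linarith⟩
  refine ⟨hmain, hEpos (x,y) hp, ?_⟩
  rw [Matrix.isUnit_iff_isUnit_det, hmain]
  exact isUnit_iff_ne_zero.mpr (by exact_mod_cast ne_of_gt (hEpos (x,y) hp))
end
end
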